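/- Let n ≥ 2 be an integer, let 0 ≤ a < b be reals, and let A, B, c > 0. Let F : [a,b] → ℝ be nondecreasing with A·rⁿ ≤ F(r) ≤ B·rⁿ for all r ∈ [a,b], and let f : [a,b] → ℝ be nonnegative, Lebesgue integrable, and satisfy ∫ₜˢ f(r) dr ≤ F(s) − F(t) whenever a ≤ t ≤ s ≤ b. Then the Lebesgue measure of the set J := {r ∈ [a,b] : f(r) > c·r^{n−1}} satisfies μ₁(J) ≤ (B·b − A·a + (n−1)·B·(b−a))/c. -/

import Mathlib

open MeasureTheory Set

lemma K1 (n : ℕ) (hn : 2 ≤ n) {r b : ℝ} (hr : 0 < r) (hrb : r ≤ b) :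
    ∫ s in r..b, ((n:ℝ)-1) * ((s:ℝ)^n)⁻¹ = (r^(n-1))⁻¹ - (b^(n-1))⁻¹ := by
  have hb : 0 < b := lt_of_lt_of_le hr hrb
  have hside : (0:ℝ) ∉ Set.uIcc r b := by
    rw [Set.uIcc_of_le hrb]; intro h; exact absurd h.1 (not_le.2 hr)
  have hz := integral_zpow (a := r) (b := b) (n := -(n:ℤ)) (Or.inr ⟨by omega, hside⟩)
  have heq : ∀ s : ℝ, ((n:ℝ)-1) * ((s:ℝ)^n)⁻¹ = ((n:ℝ)-1) * s ^ (-(n:ℤ)) := by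
    intro s; rw [zpow_neg, zpow_natCast]
  rw [intervalIntegral.integral_congr (g := fun s => ((n:ℝ)-1) * s ^ (-(n:ℤ))) (fun s _ => heq s)]
  rw [intervalIntegral.integral_const_mul, hz]
  have h1 : r ^ (-(n:ℤ) + 1) = (r ^ (n-1))⁻¹ := by
    rw [show -(n:ℤ)+1 = -((n:ℤ)-1) by ring, zpow_neg, ← zpow_natCast, show ((n-1:ℕ):ℤ) = (n:ℤ)-1 by omega]
  have h2 : b ^ (-(n:ℤ) + 1) = (b ^ (n-1))⁻¹ := by
    rw [show -(n:ℤ)+1 = -((n:ℤ)-1) by ring, zpow_neg, ← zpow_natCast, show ((n-1:ℕ):ℤ) = (n:ℤ)-1 by omega]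
  rw [h1, h2]
  have hd : ((-(n:ℤ):ℤ):ℝ) + 1 = 1 - (n:ℝ) := by push_cast; ring
  rw [hd]
  have hne : (1 - (n:ℝ)) ≠ 0 := by
    have : (2:ℝ) ≤ (n:ℝ) := by exact_mod_cast hn
    intro h; linarith
  generalize (r ^ (n-1))⁻¹ = x
  generalize (b ^ (n-1))⁻¹ = y
  field_simp
  ring


lemma K1E (n : ℕ) (hn : 2 ≤ n) {r b : ℝ} (hr : 0 < r) (hrb : r ≤ b) :
    (ENNReal.ofReal (r^(n-1)))⁻¹
      = ENNReal.ofReal ((b^(n-1))⁻¹) + ∫⁻ s in Set.Ioc r b, ENNReal.ofReal (((n:ℝ)-1) * ((s:ℝ)^n)⁻¹) := by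
  have hint : IntegrableOn (fun s : ℝ => ((n:ℝ)-1) * ((s:ℝ)^n)⁻¹) (Set.Ioc r b) := by
    apply (ContinuousOn.integrableOn_Icc ?_).mono_set Set.Ioc_subset_Icc_self
    apply ContinuousOn.mul continuousOn_const
    apply ContinuousOn.inv₀ (continuousOn_pow n)
    intro s hs
    exact pow_ne_zero n (ne_of_gt (lt_of_lt_of_le hr hs.1))
  have hb : 0 < b := lt_of_lt_of_le hr hrb
  have hnn : 0 ≤ᵐ[volume.restrict (Set.Ioc r b)] fun s : ℝ => ((n:ℝ)-1) * ((s:ℝ)^n)⁻¹ := by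
    apply (MeasureTheory.ae_restrict_iff' measurableSet_Ioc).2
    apply ae_of_all
    intro s hs
    have h1 : (0:ℝ) ≤ (n:ℝ) - 1 := by
      have : (2:ℝ) ≤ (n:ℝ) := by exact_mod_cast hn
      linarith
    have hs0 : 0 < s := lt_trans hr hs.1
    have : (0:ℝ) ≤ ((s:ℝ)^n)⁻¹ := by positivity
    exact mul_nonneg h1 this
  rw [← MeasureTheory.ofReal_integral_eq_lintegral_ofReal hint hnn]
  rw [show ∫ s in Set.Ioc r b, ((n:ℝ)-1) * ((s:ℝ)^n)⁻¹ = ∫ s in r..b, ((n:ℝ)-1) * ((s:ℝ)^n)⁻¹ from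
    (intervalIntegral.integral_of_le hrb).symm]
  rw [K1 n hn hr hrb]
  rw [← ENNReal.ofReal_add (by positivity) (by
    have h2 : (r:ℝ)^(n-1) ≤ b^(n-1) := pow_le_pow_left₀ (le_of_lt hr) hrb _
    have h3 : (0:ℝ) < r^(n-1) := by positivity
    have := inv_anti₀ h3 h2
    linarith)]
  rw [show (b^(n-1))⁻¹ + ((r^(n-1))⁻¹ - (b^(n-1))⁻¹) = (r^(n-1))⁻¹ by ring]
  rw [← ENNReal.ofReal_inv_of_pos (by positivity)]

lemma core (n : ℕ) (hn : 2 ≤ n) (a b A B : ℝ)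
    (ha : 0 ≤ a) (hab : a < b) (hA : 0 < A) (hAB : A ≤ B)
    (g : ℝ → ℝ)
    (hgmeas : Measurable g)
    (hg0 : ∀ᵐ r ∂(volume.restrict (Set.Icc a b)), 0 ≤ g r)
    (hgint : IntegrableOn g (Set.Icc a b))
    (hI : ∀ s : ℝ, a ≤ s → s ≤ b → ∫ r in a..s, g r ≤ B * s^n - A * a^n) :
    ∫⁻ r in Set.Ioc a b, ENNReal.ofReal (g r) * (ENNReal.ofReal (r^(n-1)))⁻¹
      ≤ ENNReal.ofReal (B*b - A*a + ((n:ℝ)-1)*B*(b-a)) := by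
  have hb : 0 < b := lt_of_le_of_lt ha hab
  have hB : 0 < B := lt_of_lt_of_le hA hAB
  have hn1 : (2:ℝ) ≤ (n:ℝ) := by exact_mod_cast hn
  set w : ℝ → ENNReal := fun s => ENNReal.ofReal (((n:ℝ)-1) * ((s:ℝ)^n)⁻¹) with hw
  set G : ℝ → ENNReal := fun r => ENNReal.ofReal (g r) with hG
  have hwmeas : Measurable w :=
    ENNReal.measurable_ofReal.comp (measurable_const.mul ((measurable_id.pow_const n).inv))
  have hGmeas : Measurable G := ENNReal.measurable_ofReal.comp hgmeas
  have hg0v : ∀ᵐ x ∂(volume : Measure ℝ), x ∈ Set.Icc a b → 0 ≤ g x :=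
    (ae_restrict_iff' measurableSet_Icc).1 hg0
  have hgint' : ∀ s : ℝ, s ≤ b → IntegrableOn g (Set.Ioc a s) := fun s hs =>
    hgint.mono_set (fun x hx => ⟨le_of_lt hx.1, le_trans hx.2 hs⟩)
  have hg0'' : ∀ s : ℝ, s ≤ b → 0 ≤ᵐ[volume.restrict (Set.Ioc a s)] g := by
    intro s hs
    apply (ae_restrict_iff' measurableSet_Ioc).2
    filter_upwards [hg0v] with x hx hxs
    exact hx ⟨le_of_lt hxs.1, le_trans hxs.2 hs⟩
  have hInn : ∀ s : ℝ, a ≤ s → s ≤ b → 0 ≤ ∫ r in Set.Ioc a s, g r := by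
    intro s has hsb
    apply setIntegral_nonneg_ae measurableSet_Ioc
    filter_upwards [hg0v] with x hx hxs
    exact hx ⟨le_of_lt hxs.1, le_trans hxs.2 hsb⟩
  have hIset : ∀ s : ℝ, a ≤ s → s ≤ b → ∫ r in Set.Ioc a s, g r ≤ B * s^n - A * a^n := by
    intro s has hsb
    rw [← intervalIntegral.integral_of_le has]
    exact hI s has hsb
  have hlin : ∀ s : ℝ, a ≤ s → s ≤ b →
      ∫⁻ r in Set.Ioc a s, G r ≤ ENNReal.ofReal (B * s^n - A * a^n) := by
    intro s has hsb
    rw [← MeasureTheory.ofReal_integral_eq_lintegral_ofReal (hgint' s hsb) (hg0'' s hsb)]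
    exact ENNReal.ofReal_le_ofReal (hIset s has hsb)
  -- split the weight
  have step1 : ∫⁻ r in Set.Ioc a b, G r * (ENNReal.ofReal (r^(n-1)))⁻¹
      = (∫⁻ r in Set.Ioc a b, G r * ENNReal.ofReal ((b^(n-1))⁻¹))
        + ∫⁻ r in Set.Ioc a b, G r * ∫⁻ s in Set.Ioc r b, w s := by
    rw [← lintegral_add_left (hGmeas.mul_const _)]
    apply setLIntegral_congr_fun measurableSet_Ioc
    intro r hr
    beta_reduce
    rw [K1E n hn (lt_of_le_of_lt ha hr.1) hr.2, mul_add]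
  -- first piece
  have T1 : (∫⁻ r in Set.Ioc a b, G r * ENNReal.ofReal ((b^(n-1))⁻¹))
      ≤ ENNReal.ofReal ((B * b^n - A * a^n) * (b^(n-1))⁻¹) := by
    rw [lintegral_mul_const _ hGmeas]
    calc (∫⁻ r in Set.Ioc a b, G r) * ENNReal.ofReal ((b^(n-1))⁻¹)
        ≤ ENNReal.ofReal (B * b^n - A * a^n) * ENNReal.ofReal ((b^(n-1))⁻¹) := by
          exact mul_le_mul_left (hlin b (le_of_lt hab) le_rfl) _
      _ = ENNReal.ofReal ((B * b^n - A * a^n) * (b^(n-1))⁻¹) := by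
          rw [← ENNReal.ofReal_mul]
          have h1 : A * a^n ≤ B * b^n := by
            have := pow_le_pow_left₀ ha (le_of_lt hab) n
            nlinarith [pow_nonneg ha n, pow_pos hb n]
          linarith
  -- second piece: Tonelli
  set Φ : ℝ × ℝ → ENNReal :=
    fun p => ({q : ℝ × ℝ | q.1 < q.2}.indicator (fun q => G q.1 * w q.2)) p with hΦ
  have hΦmeas : Measurable Φ :=
    ((hGmeas.comp measurable_fst).mul (hwmeas.comp measurable_snd)).indicator
      (measurableSet_lt measurable_fst measurable_snd)
  have inner1 : ∀ r ∈ Set.Ioc a b,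
      G r * (∫⁻ s in Set.Ioc r b, w s) = ∫⁻ s in Set.Ioc a b, Φ (r, s) := by
    intro r hr
    have : ∀ s : ℝ, Φ (r, s) = (Set.Ioi r).indicator (fun s => G r * w s) s := by
      intro s
      simp only [hΦ, Set.indicator, Set.mem_setOf_eq, Set.mem_Ioi]
    simp_rw [this]
    rw [lintegral_indicator measurableSet_Ioi, Measure.restrict_restrict measurableSet_Ioi]
    have hset : Set.Ioi r ∩ Set.Ioc a b = Set.Ioc r b := by
      ext x
      simp only [Set.mem_inter_iff, Set.mem_Ioi, Set.mem_Ioc]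
      constructor
      · rintro ⟨h1, _, h3⟩; exact ⟨h1, h3⟩
      · rintro ⟨h1, h2⟩; exact ⟨h1, lt_trans hr.1 h1, h2⟩
    rw [hset, lintegral_const_mul' _ _ ENNReal.ofReal_ne_top]
  have inner2 : ∀ s ∈ Set.Ioc a b,
      (∫⁻ r in Set.Ioc a b, Φ (r, s)) = (∫⁻ r in Set.Ioc a s, G r) * w s := by
    intro s hs
    have : ∀ r : ℝ, Φ (r, s) = (Set.Iio s).indicator (fun r => G r * w s) r := by
      intro r
      simp only [hΦ, Set.indicator, Set.mem_setOf_eq, Set.mem_Iio]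
    simp_rw [this]
    rw [lintegral_indicator measurableSet_Iio, Measure.restrict_restrict measurableSet_Iio]
    have hset : Set.Iio s ∩ Set.Ioc a b = Set.Ioo a s := by
      ext x
      simp only [Set.mem_inter_iff, Set.mem_Iio, Set.mem_Ioc, Set.mem_Ioo]
      constructor
      · rintro ⟨h1, h2, _⟩; exact ⟨h2, h1⟩
      · rintro ⟨h1, h2⟩; exact ⟨h2, h1, le_trans (le_of_lt h2) hs.2⟩
    rw [hset, Measure.restrict_congr_set Ioo_ae_eq_Ioc, lintegral_mul_const _ hGmeas]
  have swap : ∫⁻ r in Set.Ioc a b, ∫⁻ s in Set.Ioc a b, Φ (r, s)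
      = ∫⁻ s in Set.Ioc a b, ∫⁻ r in Set.Ioc a b, Φ (r, s) := by
    apply MeasureTheory.lintegral_lintegral_swap
    exact hΦmeas.aemeasurable
  -- pointwise bound for the s-integrand
  have hh : ∀ s ∈ Set.Ioc a b,
      ENNReal.ofReal (B * s^n - A * a^n) * w s
        = ENNReal.ofReal (((n:ℝ)-1)*B - ((n:ℝ)-1)*A*a^n*((s:ℝ)^n)⁻¹) := by
    intro s hs
    have hs0 : 0 < s := lt_of_le_of_lt ha hs.1
    have hnn : 0 ≤ B * s^n - A * a^n := by
      have h1 : A * a^n ≤ A * s^n := by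
        have := pow_le_pow_left₀ ha (le_of_lt hs.1) n
        nlinarith
      nlinarith [pow_pos hs0 n]
    rw [← ENNReal.ofReal_mul hnn]
    congr 1
    have : (s:ℝ)^n ≠ 0 := ne_of_gt (pow_pos hs0 n)
    field_simp
  have T2 : (∫⁻ r in Set.Ioc a b, G r * ∫⁻ s in Set.Ioc r b, w s)
      ≤ ∫⁻ s in Set.Ioc a b, ENNReal.ofReal (((n:ℝ)-1)*B - ((n:ℝ)-1)*A*a^n*((s:ℝ)^n)⁻¹) := by
    calc (∫⁻ r in Set.Ioc a b, G r * ∫⁻ s in Set.Ioc r b, w s)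
        = ∫⁻ r in Set.Ioc a b, ∫⁻ s in Set.Ioc a b, Φ (r, s) :=
          setLIntegral_congr_fun measurableSet_Ioc inner1
      _ = ∫⁻ s in Set.Ioc a b, ∫⁻ r in Set.Ioc a b, Φ (r, s) := swap
      _ = ∫⁻ s in Set.Ioc a b, (∫⁻ r in Set.Ioc a s, G r) * w s :=
          setLIntegral_congr_fun measurableSet_Ioc inner2
      _ ≤ ∫⁻ s in Set.Ioc a b, ENNReal.ofReal (B * s^n - A * a^n) * w s := by
          apply lintegral_mono_ae
          apply (ae_restrict_iff' measurableSet_Ioc).2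
          apply ae_of_all
          intro s hs
          exact mul_le_mul_left (hlin s (le_of_lt hs.1) hs.2) _
      _ = ∫⁻ s in Set.Ioc a b, ENNReal.ofReal (((n:ℝ)-1)*B - ((n:ℝ)-1)*A*a^n*((s:ℝ)^n)⁻¹) :=
          setLIntegral_congr_fun measurableSet_Ioc hh
  -- evaluate the last integral
  set h : ℝ → ℝ := fun s => ((n:ℝ)-1)*B - ((n:ℝ)-1)*A*a^n*((s:ℝ)^n)⁻¹ with hhdef
  have hhnn : ∀ᵐ s ∂(volume.restrict (Set.Ioc a b)), 0 ≤ h s := by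
    apply (ae_restrict_iff' measurableSet_Ioc).2
    apply ae_of_all
    intro s hs
    have hs0 : 0 < s := lt_of_le_of_lt ha hs.1
    have h1 : A * a^n ≤ B * s^n := by
      have := pow_le_pow_left₀ ha (le_of_lt hs.1) n
      nlinarith [pow_pos hs0 n]
    have hsn : (0:ℝ) < (s:ℝ)^n := pow_pos hs0 n
    rw [hhdef]
    simp only
    have key : ((n:ℝ)-1)*B - ((n:ℝ)-1)*A*a^n*((s:ℝ)^n)⁻¹
        = (((n:ℝ)-1) * (B*s^n - A*a^n)) * ((s:ℝ)^n)⁻¹ := by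
      field_simp
    rw [key]
    have : 0 ≤ ((n:ℝ)-1) * (B*s^n - A*a^n) := by nlinarith
    positivity
  have hhint : IntegrableOn h (Set.Ioc a b) := by
    rcases eq_or_lt_of_le ha with ha0 | ha0
    · have : h = fun _ : ℝ => ((n:ℝ)-1)*B := by
        funext s
        rw [hhdef]
        simp [← ha0, zero_pow (show n ≠ 0 by omega)]
      rw [this]
      exact integrableOn_const measure_Ioc_lt_top.ne
    · apply (ContinuousOn.integrableOn_Icc ?_).mono_set Set.Ioc_subset_Icc_self
      apply ContinuousOn.sub continuousOn_const
      apply ContinuousOn.mul continuousOn_const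
      apply ContinuousOn.inv₀ (continuousOn_pow n)
      intro s hs
      exact pow_ne_zero n (ne_of_gt (lt_of_lt_of_le ha0 hs.1))
  have hT2val : (∫⁻ s in Set.Ioc a b, ENNReal.ofReal (h s))
      = ENNReal.ofReal (∫ s in Set.Ioc a b, h s) :=
    (MeasureTheory.ofReal_integral_eq_lintegral_ofReal hhint hhnn).symm
  have hInt_h_nn : 0 ≤ ∫ s in Set.Ioc a b, h s := setIntegral_nonneg_ae measurableSet_Ioc
    ((ae_restrict_iff' measurableSet_Ioc).1 hhnn)
  -- real-number bound
  have hsum : (B * b^n - A * a^n) * (b^(n-1))⁻¹ + ∫ s in Set.Ioc a b, h s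
      ≤ B*b - A*a + ((n:ℝ)-1)*B*(b-a) := by
    have e1 : b^n * (b^(n-1))⁻¹ = b := by
      have hbn : b^n = b^(n-1) * b := by
        rw [← pow_succ]
        congr 1
        omega
      rw [hbn]
      field_simp
    rcases eq_or_lt_of_le ha with ha0 | ha0
    · have hhconst : h = fun _ : ℝ => ((n:ℝ)-1)*B := by
        funext s
        rw [hhdef]
        simp [← ha0, zero_pow (show n ≠ 0 by omega)]
      rw [hhconst]
      rw [setIntegral_const, Real.volume_real_Ioc_of_le (by linarith)]
      rw [← ha0]
      simp only [mul_zero, sub_zero, zero_pow (show n ≠ 0 by omega), smul_eq_mul, mul_zero, sub_zero]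
      have : B * b ^ n * (b ^ (n - 1))⁻¹ = B * b := by
        rw [mul_assoc, e1]
      rw [this]
      linarith
    · -- a > 0
      have e2 : a^n * (a^(n-1))⁻¹ = a := by
        have han : a^n = a^(n-1) * a := by
          rw [← pow_succ]
          congr 1
          omega
        rw [han]
        field_simp
      have hint2 : ∫ s in Set.Ioc a b, h s
          = ((n:ℝ)-1)*B*(b-a) - A*a^n*((a^(n-1))⁻¹ - (b^(n-1))⁻¹) := by
        rw [← intervalIntegral.integral_of_le (le_of_lt hab)]
        have hIcont : IntervalIntegrable (fun s : ℝ => ((n:ℝ)-1) * ((s:ℝ)^n)⁻¹) volume a b := by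
          apply ContinuousOn.intervalIntegrable
          rw [Set.uIcc_of_le (le_of_lt hab)]
          apply ContinuousOn.mul continuousOn_const
          apply ContinuousOn.inv₀ (continuousOn_pow n)
          intro s hs
          exact pow_ne_zero n (ne_of_gt (lt_of_lt_of_le ha0 hs.1))
        have : (fun s : ℝ => h s)
            = fun s : ℝ => ((n:ℝ)-1)*B - A*a^n * (((n:ℝ)-1) * ((s:ℝ)^n)⁻¹) := by
          funext s
          rw [hhdef]
          ring
        rw [this]
        have i2 : ∫ s in a..b, A*a^n * (((n:ℝ)-1) * ((s:ℝ)^n)⁻¹)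
            = A*a^n * ((a^(n-1))⁻¹ - (b^(n-1))⁻¹) := by
          rw [intervalIntegral.integral_const_mul, K1 n hn ha0 (le_of_lt hab)]
        rw [intervalIntegral.integral_sub intervalIntegrable_const (hIcont.const_mul _), i2]
        simp only [intervalIntegral.integral_const, smul_eq_mul]
        ring
      rw [hint2]
      have goal_eq : (B * b^n - A * a^n) * (b^(n-1))⁻¹
          + (((n:ℝ)-1)*B*(b-a) - A*a^n*((a^(n-1))⁻¹ - (b^(n-1))⁻¹))
          = B*b - A*a + ((n:ℝ)-1)*B*(b-a) := by
        have expand : (B * b^n - A * a^n) * (b^(n-1))⁻¹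
            = B * (b^n * (b^(n-1))⁻¹) - A * a^n * (b^(n-1))⁻¹ := by ring
        rw [expand, e1]
        have : A*a^n*((a^(n-1))⁻¹ - (b^(n-1))⁻¹)
            = A * (a^n * (a^(n-1))⁻¹) - A * a^n * (b^(n-1))⁻¹ := by ring
        rw [this, e2]
        ring
      linarith
  -- put it all together
  calc ∫⁻ r in Set.Ioc a b, G r * (ENNReal.ofReal (r^(n-1)))⁻¹
      = (∫⁻ r in Set.Ioc a b, G r * ENNReal.ofReal ((b^(n-1))⁻¹))
        + ∫⁻ r in Set.Ioc a b, G r * ∫⁻ s in Set.Ioc r b, w s := step1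
    _ ≤ ENNReal.ofReal ((B * b^n - A * a^n) * (b^(n-1))⁻¹)
        + ENNReal.ofReal (∫ s in Set.Ioc a b, h s) := by
        apply add_le_add T1
        rw [← hT2val]
        exact T2
    _ = ENNReal.ofReal ((B * b^n - A * a^n) * (b^(n-1))⁻¹ + ∫ s in Set.Ioc a b, h s) := by
        rw [← ENNReal.ofReal_add ?x hInt_h_nn]
        case x =>
          have h1 : A * a^n ≤ B * b^n := by
            have := pow_le_pow_left₀ ha (le_of_lt hab) n
            nlinarith [pow_nonneg ha n, pow_pos hb n]
          have : (0:ℝ) ≤ (b^(n-1))⁻¹ := by positivity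
          nlinarith
    _ ≤ ENNReal.ofReal (B*b - A*a + ((n:ℝ)-1)*B*(b-a)) := ENNReal.ofReal_le_ofReal hsum

/-- Corollary 1.4 (abstract form): if `F` plays the role of the volume of balls
(`A·rⁿ ≤ F(r) ≤ B·rⁿ`, nondecreasing) and `f ≥ 0` plays the role of the perimeter of
sphere boundaries (coarea: `∫ₜˢ f ≤ F(s) − F(t)`), then the set of radii `r ∈ [a,b]`
where `f(r) > c·r^{n−1}` has Lebesgue measure at most
`(B·b − A·a + (n−1)·B·(b−a))/c`. -/
theorem measure_exceptional_radii_le (n : ℕ) (hn : 2 ≤ n) (a b A B c : ℝ)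
    (ha : 0 ≤ a) (hab : a < b) (hA : 0 < A) (hB : 0 < B) (hc : 0 < c)
    (F f : ℝ → ℝ)
    (hFmono : MonotoneOn F (Set.Icc a b))
    (hFlb : ∀ r ∈ Set.Icc a b, A * r ^ n ≤ F r)
    (hFub : ∀ r ∈ Set.Icc a b, F r ≤ B * r ^ n)
    (hf0 : ∀ r ∈ Set.Icc a b, 0 ≤ f r)
    (hfint : IntegrableOn f (Set.Icc a b))
    (hcoarea : ∀ t s : ℝ, a ≤ t → t ≤ s → s ≤ b → ∫ r in t..s, f r ≤ F s - F t) :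
    volume {r ∈ Set.Icc a b | c * r ^ (n - 1) < f r} ≤
      ENNReal.ofReal ((B * b - A * a + ((n : ℝ) - 1) * B * (b - a)) / c) := by
  have hb : 0 < b := lt_of_le_of_lt ha hab
  have hmemb : b ∈ Set.Icc a b := ⟨le_of_lt hab, le_rfl⟩
  have hmema : a ∈ Set.Icc a b := ⟨le_rfl, le_of_lt hab⟩
  have hAB : A ≤ B := by
    have h1 := le_trans (hFlb b hmemb) (hFub b hmemb)
    nlinarith [pow_pos hb n]
  have hfae := hfint.aestronglyMeasurable
  set g : ℝ → ℝ := hfae.mk f with hgdef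
  have hgmeas : Measurable g := hfae.stronglyMeasurable_mk.measurable
  have hfg : f =ᵐ[volume.restrict (Set.Icc a b)] g := hfae.ae_eq_mk
  have hg0 : ∀ᵐ r ∂(volume.restrict (Set.Icc a b)), 0 ≤ g r := by
    filter_upwards [hfg, ae_restrict_mem measurableSet_Icc] with x hx hmem
    rw [← hx]; exact hf0 x hmem
  have hgint : IntegrableOn g (Set.Icc a b) := hfint.congr hfg
  have hI : ∀ s : ℝ, a ≤ s → s ≤ b → ∫ r in a..s, g r ≤ B * s^n - A * a^n := by
    intro s has hsb
    have heq : ∫ r in a..s, g r = ∫ r in a..s, f r := by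
      rw [intervalIntegral.integral_of_le has, intervalIntegral.integral_of_le has]
      apply MeasureTheory.integral_congr_ae
      have hres : f =ᵐ[volume.restrict (Set.Ioc a s)] g :=
        ae_restrict_of_ae_restrict_of_subset
          (fun x hx => ⟨le_of_lt hx.1, le_trans hx.2 hsb⟩ : Set.Ioc a s ⊆ Set.Icc a b) hfg
      exact hres.symm
    rw [heq]
    have h1 := hcoarea a s le_rfl has hsb
    have h2 := hFub s ⟨has, hsb⟩
    have h3 := hFlb a hmema
    linarith
  set J' : Set ℝ := {r ∈ Set.Icc a b | c * r ^ (n - 1) < g r} with hJ'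
  have hN : volume ({x | f x ≠ g x} ∩ Set.Icc a b) = 0 := by
    rw [← Measure.restrict_apply' measurableSet_Icc]
    exact hfg
  have hsub : {r ∈ Set.Icc a b | c * r ^ (n - 1) < f r}
      ⊆ J' ∪ ({x | f x ≠ g x} ∩ Set.Icc a b) := by
    intro r hr
    by_cases hrfg : f r = g r
    · left; exact ⟨hr.1, hrfg ▸ hr.2⟩
    · right; exact ⟨hrfg, hr.1⟩
  have step0 : volume {r ∈ Set.Icc a b | c * r ^ (n - 1) < f r} ≤ volume J' := by
    calc volume {r ∈ Set.Icc a b | c * r ^ (n - 1) < f r}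
        ≤ volume (J' ∪ ({x | f x ≠ g x} ∩ Set.Icc a b)) := measure_mono hsub
      _ ≤ volume J' + volume ({x | f x ≠ g x} ∩ Set.Icc a b) := measure_union_le _ _
      _ = volume J' := by rw [hN, add_zero]
  have hsub2 : J' ⊆ (J' ∩ Set.Ioc a b) ∪ {a} := by
    intro r hr
    rcases eq_or_lt_of_le hr.1.1 with h | h
    · right; exact h.symm
    · left; exact ⟨hr, h, hr.1.2⟩
  have step0' : volume J' ≤ volume (J' ∩ Set.Ioc a b) := by
    calc volume J' ≤ volume (J' ∩ Set.Ioc a b) + volume ({a} : Set ℝ) :=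
          le_trans (measure_mono hsub2) (measure_union_le _ _)
      _ = volume (J' ∩ Set.Ioc a b) := by rw [Real.volume_singleton, add_zero]
  -- key estimate
  have hmono : ∀ r ∈ J' ∩ Set.Ioc a b,
      ENNReal.ofReal c ≤ ENNReal.ofReal (g r) * (ENNReal.ofReal (r^(n-1)))⁻¹ := by
    intro r hr
    have hr0 : 0 < r := lt_of_le_of_lt ha hr.2.1
    have hrp : (0:ℝ) < r^(n-1) := pow_pos hr0 _
    have hlt : c * r^(n-1) < g r := hr.1.2
    have hcle : c ≤ g r * (r^(n-1))⁻¹ := by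
      rw [← div_eq_mul_inv]
      exact (le_div_iff₀ hrp).2 (le_of_lt hlt)
    calc ENNReal.ofReal c ≤ ENNReal.ofReal (g r * (r^(n-1))⁻¹) := ENNReal.ofReal_le_ofReal hcle
      _ = ENNReal.ofReal (g r) * ENNReal.ofReal ((r^(n-1))⁻¹) := by
          apply ENNReal.ofReal_mul
          nlinarith
      _ = ENNReal.ofReal (g r) * (ENNReal.ofReal (r^(n-1)))⁻¹ := by
          rw [ENNReal.ofReal_inv_of_pos hrp]
  have hkey : ENNReal.ofReal c * volume (J' ∩ Set.Ioc a b)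
      ≤ ENNReal.ofReal (B*b - A*a + ((n:ℝ)-1)*B*(b-a)) := by
    have hJm : MeasurableSet (J' ∩ Set.Ioc a b) := by
      apply MeasurableSet.inter ?_ measurableSet_Ioc
      exact (measurableSet_Icc.inter
        (measurableSet_lt (by fun_prop) hgmeas))
    calc ENNReal.ofReal c * volume (J' ∩ Set.Ioc a b)
        = ∫⁻ _ in J' ∩ Set.Ioc a b, ENNReal.ofReal c := (setLIntegral_const _ _).symm
      _ ≤ ∫⁻ r in J' ∩ Set.Ioc a b, ENNReal.ofReal (g r) * (ENNReal.ofReal (r^(n-1)))⁻¹ := by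
          apply lintegral_mono_ae
          apply (ae_restrict_iff' hJm).2
          exact ae_of_all _ hmono
      _ ≤ ∫⁻ r in Set.Ioc a b, ENNReal.ofReal (g r) * (ENNReal.ofReal (r^(n-1)))⁻¹ :=
          lintegral_mono_set Set.inter_subset_right
      _ ≤ ENNReal.ofReal (B*b - A*a + ((n:ℝ)-1)*B*(b-a)) :=
          core n hn a b A B ha hab hA hAB g hgmeas hg0 hgint hI
  have final : volume (J' ∩ Set.Ioc a b)
      ≤ ENNReal.ofReal ((B * b - A * a + ((n : ℝ) - 1) * B * (b - a)) / c) := by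
    rw [ENNReal.ofReal_div_of_pos hc]
    rw [ENNReal.le_div_iff_mul_le (Or.inl (ne_of_gt (ENNReal.ofReal_pos.2 hc)))
      (Or.inl ENNReal.ofReal_ne_top)]
    rw [mul_comm]
    exact hkey
  exact le_trans (le_trans step0 step0') final
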